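/- Let n ≥ 2, c = (c_1,…,c_n) ∈ ℂ^n, and let W_c ⊆ V^{⊗n} be the image of F(c). Consider the space V^{⊗n} ⊗ V with the copies of V labeled 1, …, n, n+1 from left to right. Then for every v ∈ ℂ the endomorphism R_{n,n+1}(c_n−v) ⋯ R_{2,n+1}(c_2−v) R_{1,n+1}(c_1−v) of V^{⊗n} ⊗ V maps the subspace W_c ⊗ V into itself. -/

import Mathlib

/-!
We model the finite-dimensional complex vector space `V` as `ℂ^N` (i.e. `Fin N → ℂ`),
so that `V^{⊗ n}` is `(Fin n → Fin N) → ℂ` and endomorphisms of `V^{⊗ n}` are matrices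
indexed by multi-indices `Fin n → Fin N`.
-/

open scoped BigOperators

noncomputable section

/-- Endomorphisms of `V ⊗ V` for `V = ℂ^N`. -/
abbrev End2 (N : ℕ) := Matrix (Fin N × Fin N) (Fin N × Fin N) ℂ

/-- Endomorphisms of `V^{⊗ n}` for `V = ℂ^N`. -/
abbrev EndT (N n : ℕ) := Matrix (Fin n → Fin N) (Fin n → Fin N) ℂ

/-- `X_{a,b}` : the endomorphism `X` of `V ⊗ V` applied to the tensor factors `a` and `b`
(in that order) of `V^{⊗ n}`, and the identity on all other factors. -/
def op2 (N n : ℕ) (X : End2 N) (a b : Fin n) : EndT N n :=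
  fun f g => X (f a, f b) (g a, g b) *
    ∏ i : Fin n, if i ≠ a ∧ i ≠ b then (if f i = g i then (1 : ℂ) else 0) else 1

/-- The flip (permutation) operator `P : x ⊗ y ↦ y ⊗ x` on `V ⊗ V`. -/
def flipMat (N : ℕ) : End2 N := fun p q => if p.1 = q.2 ∧ p.2 = q.1 then 1 else 0

/-- `R` is a solution of the Yang--Baxter equation (with additive spectral parameters)
on `V ⊗ V ⊗ V`:  `R₁₂(u) R₁₃(u+v) R₂₃(v) = R₂₃(v) R₁₃(u+v) R₁₂(u)`. -/
def YangBaxter (N : ℕ) (R : ℂ → End2 N) : Prop :=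
  ∀ u v : ℂ,
    op2 N 3 (R u) 0 1 * op2 N 3 (R (u + v)) 0 2 * op2 N 3 (R v) 1 2 =
    op2 N 3 (R v) 1 2 * op2 N 3 (R (u + v)) 0 2 * op2 N 3 (R u) 0 1

/-- The fused operator `R_{c,c'}(u)`, acting on `V^{⊗ m}`, where the `n` factors of the first
block are embedded via `a` and the `n'` factors of the second block via `b`:
`R_{c,c'}(u) = ∏→_{i=1..n'} [ R_{n,i'}(u+c_n−c'_i) ⋯ R_{2,i'}(u+c_2−c'_i) R_{1,i'}(u+c_1−c'_i) ]`. -/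
def fusedOp (N : ℕ) (R : ℂ → End2 N) {m n n' : ℕ} (a : Fin n → Fin m) (b : Fin n' → Fin m)
    (c : Fin n → ℂ) (c' : Fin n' → ℂ) (u : ℂ) : EndT N m :=
  ((List.finRange n').map fun i =>
    (((List.finRange n).reverse).map fun k =>
      op2 N m (R (u + c k - c' i)) (a k) (b i)).prod).prod

/-- The list of pairs `(i,j)` with `i < j`, in lexicographic order. -/
def lexPairs (n : ℕ) : List (Fin n × Fin n) :=
  (List.finRange n).flatMap fun i =>
    ((List.finRange n).filter fun j => decide (i < j)).map fun j => (i, j)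

/-- The operator `F(c) = ∏→_{1 ≤ i < j ≤ n} R_{i,j}(c_i − c_j)` on `V^{⊗ n}`
(product over the pairs `i < j` in lexicographic order). -/
def Fop (N : ℕ) (R : ℂ → End2 N) {n : ℕ} (c : Fin n → ℂ) : EndT N n :=
  ((lexPairs n).map fun p => op2 N n (R (c p.1 - c p.2)) p.1 p.2).prod

/-- The endomorphism of `V^{⊗ n}` embedded into `V^{⊗ m}`, acting on the factors listed
by `e` and identically on all other factors. -/
def opBlock (N : ℕ) {m n : ℕ} (e : Fin n → Fin m) (X : EndT N n) : EndT N m :=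
  fun f g => X (f ∘ e) (g ∘ e) *
    ∏ i : Fin m, if ∀ k, e k ≠ i then (if f i = g i then (1 : ℂ) else 0) else 1

/-- The operator `P_π` on `V^{⊗ n}` permuting the tensor factors:
`P_π (x_1 ⊗ ⋯ ⊗ x_n) = x_{π(1)} ⊗ ⋯ ⊗ x_{π(n)}`. -/
def permMat (N n : ℕ) (π : Equiv.Perm (Fin n)) : EndT N n :=
  fun f g => if f = g ∘ π then 1 else 0

/-- The tensor product of a vector of `V^{⊗ n}` and a vector of `V^{⊗ n'}`,
as a vector of `V^{⊗ (n+n')}`. -/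
def tensVec (N : ℕ) {n n' : ℕ} (x : (Fin n → Fin N) → ℂ) (y : (Fin n' → Fin N) → ℂ) :
    (Fin (n + n') → Fin N) → ℂ :=
  fun f => x (fun i => f (Fin.castAdd n' i)) * y (fun j => f (Fin.natAdd n j))

end



noncomputable section

variable {M : Type*} [Monoid M] {ι : Type*}

/-- `FBprod B [i₁,...,iₖ] = (∏_{j>1} B i₁ i_j) * (∏_{j>2} B i₂ i_j) * ⋯`. -/
def FBprod (B : ι → ι → M) : List ι → M
  | [] => 1
  | i :: t => (t.map (B i)).prod * FBprod B t

lemma commute_FBprod (A : ι → M) (B : ι → ι → M)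
    (h2 : ∀ i j k, k ≠ i → k ≠ j → Commute (A k) (B i j)) :
    ∀ (t : List ι) (k : ι), k ∉ t → Commute (A k) (FBprod B t) := by
  intro t
  induction t with
  | nil => intro k _; simp [FBprod]
  | cons i s ih =>
    intro k hk
    simp only [List.mem_cons, not_or] at hk
    refine Commute.mul_right (Commute.list_prod_right _ _ ?_) (ih k hk.2)
    intro y hy
    obtain ⟨j, hj, rfl⟩ := List.mem_map.1 hy
    exact h2 i j k hk.1 (fun h => hk.2 (h ▸ hj))

lemma inner_key (A : ι → M) (B : ι → ι → M) {P : ι → ι → Prop}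
    (h1 : ∀ i j, P i j → B i j * (A i * A j) = A j * (A i * B i j))
    (h2 : ∀ i j k, k ≠ i → k ≠ j → Commute (A k) (B i j)) (i : ι) :
    ∀ t : List ι, (∀ j ∈ t, P i j) → i ∉ t → t.Nodup →
      (t.reverse.map A).prod * (A i * (t.map (B i)).prod) =
      (t.map (B i)).prod * (A i * (t.reverse.map A).prod) := by
  intro t
  induction t with
  | nil => simp
  | cons j s ih =>
    intro hP hi hnd
    simp only [List.mem_cons, not_or] at hi
    have hij : i ≠ j := hi.1
    have hPj : P i j := hP j List.mem_cons_self
    set X := (s.reverse.map A).prod with hX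
    set G := (s.map (B i)).prod with hG
    have hrev : ((j :: s).reverse.map A).prod = X * A j := by
      rw [List.reverse_cons, List.map_append, List.prod_append]
      simp only [List.map_cons, List.map_nil, List.prod_cons, List.prod_nil, mul_one]
      rfl
    have hmapB : ((j :: s).map (B i)).prod = B i j * G := by simp [hG]
    have hBX : Commute (B i j) X := by
      refine Commute.list_prod_right _ _ ?_
      intro y hy
      obtain ⟨k, hk, rfl⟩ := List.mem_map.1 hy
      rw [List.mem_reverse] at hk
      exact (h2 i j k (fun h => hi.2 (h ▸ hk))
        (fun h => (List.nodup_cons.1 hnd).1 (h ▸ hk))).symm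
    have hAjG : Commute (A j) G := by
      refine Commute.list_prod_right _ _ ?_
      intro y hy
      obtain ⟨k, hk, rfl⟩ := List.mem_map.1 hy
      exact h2 i k j (Ne.symm hij) (fun h => (List.nodup_cons.1 hnd).1 (h ▸ hk))
    have IH := ih (fun k hk => hP k (List.mem_cons_of_mem _ hk)) hi.2 (List.nodup_cons.1 hnd).2
    rw [hrev, hmapB]
    calc X * A j * (A i * (B i j * G))
        = X * (A j * (A i * B i j)) * G := by
          simp only [mul_assoc]
      _ = X * (B i j * (A i * A j)) * G := by rw [← h1 i j hPj]
      _ = B i j * (X * (A i * G)) * A j := by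
          rw [← mul_assoc X (B i j), ← hBX.eq]
          simp only [mul_assoc]
          rw [hAjG.eq]
      _ = B i j * (G * (A i * X)) * A j := by rw [IH]
      _ = B i j * G * (A i * (X * A j)) := by simp only [mul_assoc]

lemma key_lemma (A : ι → M) (B : ι → ι → M) {P : ι → ι → Prop}
    (h1 : ∀ i j, P i j → B i j * (A i * A j) = A j * (A i * B i j))
    (h2 : ∀ i j k, k ≠ i → k ≠ j → Commute (A k) (B i j)) :
    ∀ l : List ι, l.Pairwise P → l.Nodup →
      (l.reverse.map A).prod * FBprod B l = FBprod B l * (l.map A).prod := by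
  intro l
  induction l with
  | nil => simp [FBprod]
  | cons i t ih =>
    intro hp hnd
    obtain ⟨hpi, hpt⟩ := List.pairwise_cons.1 hp
    obtain ⟨hit, hndt⟩ := List.nodup_cons.1 hnd
    have hrev : ((i :: t).reverse.map A).prod = (t.reverse.map A).prod * A i := by
      rw [List.reverse_cons, List.map_append, List.prod_append]
      simp only [List.map_cons, List.map_nil, List.prod_cons, List.prod_nil, mul_one]
    set X := (t.reverse.map A).prod with hX
    set G := (t.map (B i)).prod with hG
    have hinner := inner_key A B h1 h2 i t hpi hit hndt
    have hcom := commute_FBprod A B h2 t i hit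
    calc ((i :: t).reverse.map A).prod * FBprod B (i :: t)
        = X * (A i * G) * FBprod B t := by
          rw [hrev]; simp only [FBprod, mul_assoc]
          rfl
      _ = G * (A i * X) * FBprod B t := by rw [hinner]
      _ = G * (A i * (X * FBprod B t)) := by simp only [mul_assoc]
      _ = G * (A i * (FBprod B t * (t.map A).prod)) := by rw [ih hpt hndt]
      _ = G * (FBprod B t * (A i * (t.map A).prod)) := by
          rw [← mul_assoc (A i), hcom.eq, mul_assoc]
      _ = FBprod B (i :: t) * ((i :: t).map A).prod := by
          simp only [FBprod, List.map_cons, List.prod_cons, mul_assoc]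
          rfl


lemma lexPairs_prod {M : Type*} [Monoid M] {n : ℕ} (B : Fin n → Fin n → M) :
    ∀ l : List (Fin n), l.Pairwise (· < ·) →
      ((l.flatMap fun i => (l.filter fun j => decide (i < j)).map fun j => (i, j)).map
        fun p => B p.1 p.2).prod = FBprod B l := by
  intro l
  induction l with
  | nil => simp [FBprod]
  | cons i t ih =>
    intro hp
    obtain ⟨hlt, hpt⟩ := List.pairwise_cons.1 hp
    have h1 : ((i :: t).filter fun j => decide (i < j)) = t := by
      rw [List.filter_cons]
      simp only [lt_irrefl, decide_false, if_false]
      exact List.filter_eq_self.2 fun j hj => decide_eq_true (hlt j hj)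
    have h2 : (t.flatMap fun x => ((i :: t).filter fun j => decide (x < j)).map fun j => (x, j))
        = t.flatMap fun x => (t.filter fun j => decide (x < j)).map fun j => (x, j) := by
      refine List.flatMap_congr fun x hx => ?_
      congr 1
      rw [List.filter_cons]
      rw [decide_eq_false (not_lt.2 (le_of_lt (hlt x hx)) : ¬ x < i)]
      simp
    rw [List.flatMap_cons, h1, h2, List.map_append, List.prod_append, List.map_map, ih hpt]
    rfl
section machinery
variable {N m k : ℕ}

lemma prod_ite_delta (S : Fin m → Prop) [DecidablePred S] (f g : Fin m → Fin N) :
    (∏ i, if S i then (if f i = g i then (1:ℂ) else 0) else 1)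
      = if ∀ i, S i → f i = g i then 1 else 0 := by
  by_cases h : ∀ i, S i → f i = g i
  · rw [if_pos h]
    apply Finset.prod_eq_one
    intro i _
    by_cases hS : S i
    · simp [hS, h i hS]
    · simp [hS]
  · rw [if_neg h]
    push_neg at h
    obtain ⟨i, hS, hfg⟩ := h
    apply Finset.prod_eq_zero (Finset.mem_univ i)
    simp [hS, hfg]

lemma op2_apply (X : End2 N) (a b : Fin m) (f g : Fin m → Fin N) :
    op2 N m X a b f g = X (f a, f b) (g a, g b) *
      (if ∀ i, i ≠ a ∧ i ≠ b → f i = g i then 1 else 0) := by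
  unfold op2
  rw [prod_ite_delta (fun i => i ≠ a ∧ i ≠ b)]

def dOut (e : Fin k → Fin m) (f g : Fin m → Fin N) : ℂ :=
  if ∀ i, (∀ j, e j ≠ i) → f i = g i then 1 else 0

lemma opBlock_apply (e : Fin k → Fin m) (X : EndT N k) (f g : Fin m → Fin N) :
    opBlock N e X f g = X (f ∘ e) (g ∘ e) * dOut e f g := by
  unfold opBlock dOut
  rw [prod_ite_delta (fun i => ∀ j, e j ≠ i)]

def patch (e : Fin k → Fin m) (f : Fin m → Fin N) (p : Fin k → Fin N) : Fin m → Fin N :=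
  fun i => if h : ∃ j, e j = i then p h.choose else f i

lemma patch_apply_e {e : Fin k → Fin m} (he : Function.Injective e)
    (f : Fin m → Fin N) (p : Fin k → Fin N) (j : Fin k) : patch e f p (e j) = p j := by
  have h : ∃ j', e j' = e j := ⟨j, rfl⟩
  simp only [patch, dif_pos h]
  congr 1
  exact he h.choose_spec

lemma patch_apply_not {e : Fin k → Fin m} (f : Fin m → Fin N) (p : Fin k → Fin N)
    {i : Fin m} (hi : ∀ j, e j ≠ i) : patch e f p i = f i := by
  apply dif_neg
  rintro ⟨j, rfl⟩
  exact hi j rfl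

lemma dOut_patch_left {e : Fin k → Fin m} (f g : Fin m → Fin N) (p : Fin k → Fin N) :
    dOut e (patch e f p) g = dOut e f g := by
  unfold dOut
  apply if_congr _ rfl rfl
  constructor
  · intro H i hi; rw [← patch_apply_not f p hi]; exact H i hi
  · intro H i hi; rw [patch_apply_not f p hi]; exact H i hi

lemma dOut_f_patch {e : Fin k → Fin m} (f : Fin m → Fin N) (p : Fin k → Fin N) :
    dOut e f (patch e f p) = 1 := by
  unfold dOut
  rw [if_pos]
  intro i hi
  rw [patch_apply_not f p hi]

/-- Collapse a sum over `h : Fin m → Fin N` weighted by `dOut e f h` to a sum over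
the values on the block. -/
lemma sum_dOut {e : Fin k → Fin m} (he : Function.Injective e) (f : Fin m → Fin N)
    (F : (Fin m → Fin N) → ℂ) :
    ∑ h, dOut e f h * F h = ∑ p, F (patch e f p) := by
  classical
  have hleft : ∀ h : Fin m → Fin N, (∀ i, (∀ j, e j ≠ i) → f i = h i) →
      patch e f (h ∘ e) = h := by
    intro h hh
    funext i
    by_cases hx : ∃ j, e j = i
    · obtain ⟨j, rfl⟩ := hx
      exact patch_apply_e he f _ j
    · push_neg at hx
      rw [patch_apply_not f _ hx]
      exact hh i hx
  rw [← Finset.sum_filter_of_ne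
    (p := fun h => ∀ i : Fin m, (∀ j, e j ≠ i) → f i = h i) (s := Finset.univ)]
  · refine Finset.sum_nbij' (i := fun h => h ∘ e) (j := fun p => patch e f p)
      ?_ ?_ ?_ ?_ ?_
    · intro a _; exact Finset.mem_univ _
    · intro p _
      rw [Finset.mem_filter]
      refine ⟨Finset.mem_univ _, fun i hi => (patch_apply_not f p hi).symm⟩
    · intro h hh
      rw [Finset.mem_filter] at hh
      exact hleft h hh.2
    · intro p _
      funext j
      exact patch_apply_e he f p j
    · intro h hh
      rw [Finset.mem_filter] at hh
      have h1 : dOut e f h = 1 := if_pos hh.2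
      show dOut e f h * F h = F (patch e f (h ∘ e))
      rw [h1, one_mul, hleft h hh.2]
  · intro h _ hne
    by_contra hc
    apply hne
    have : dOut e f h = 0 := if_neg hc
    rw [this, zero_mul]

lemma opBlock_mul {e : Fin k → Fin m} (he : Function.Injective e) (X Y : EndT N k) :
    opBlock N e (X * Y) = opBlock N e X * opBlock N e Y := by
  funext f g
  rw [Matrix.mul_apply]
  have : ∀ h, opBlock N e X f h * opBlock N e Y h g =
      dOut e f h * (X (f ∘ e) (h ∘ e) * (Y (h ∘ e) (g ∘ e) * dOut e h g)) := by
    intro h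
    rw [opBlock_apply, opBlock_apply]
    ring
  rw [Finset.sum_congr rfl fun h _ => this h, sum_dOut he, opBlock_apply, Matrix.mul_apply,
    Finset.sum_mul]
  refine Finset.sum_congr rfl fun p _ => ?_
  have h1 : patch e f p ∘ e = p := funext fun j => patch_apply_e he f p j
  rw [h1, dOut_patch_left]
  ring

lemma opBlock_one {e : Fin k → Fin m} (he : Function.Injective e) :
    opBlock N e (1 : EndT N k) = 1 := by
  funext f g
  rw [opBlock_apply, Matrix.one_apply, Matrix.one_apply]
  unfold dOut
  by_cases h : f = g
  · subst h; simp
  · rw [if_neg h]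
    by_cases h1 : f ∘ e = g ∘ e
    · rw [if_pos h1, one_mul]
      rw [if_neg]
      intro hc
      apply h
      funext i
      by_cases hx : ∃ j, e j = i
      · obtain ⟨j, rfl⟩ := hx
        exact congrFun h1 j
      · push_neg at hx
        exact hc i hx
    · rw [if_neg h1, zero_mul]

lemma ite_one_zero_mul (P Q Rp : Prop) [Decidable P] [Decidable Q] [Decidable Rp]
    (h : P ∧ Q ↔ Rp) : (if P then (1:ℂ) else 0) * (if Q then 1 else 0) = if Rp then 1 else 0 := by
  by_cases hP : P <;> by_cases hQ : Q <;> simp_all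

lemma opBlock_op2 {e : Fin k → Fin m} (he : Function.Injective e) (X : End2 N) (i j : Fin k) :
    opBlock N e (op2 N k X i j) = op2 N m X (e i) (e j) := by
  funext f g
  rw [opBlock_apply, op2_apply, op2_apply]
  unfold dOut
  rw [mul_assoc]
  congr 1
  refine ite_one_zero_mul _ _ _ ?_
  constructor
  · rintro ⟨hP, hQ⟩ x ⟨hx1, hx2⟩
    by_cases hr : ∃ l, e l = x
    · obtain ⟨l, rfl⟩ := hr
      exact hP l ⟨fun h => hx1 (h ▸ rfl), fun h => hx2 (h ▸ rfl)⟩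
    · push_neg at hr
      exact hQ x hr
  · intro hRR
    constructor
    · intro l ⟨hl1, hl2⟩
      exact hRR (e l) ⟨fun h => hl1 (he h), fun h => hl2 (he h)⟩
    · intro x hx
      exact hRR x ⟨fun h => hx i h.symm, fun h => hx j h.symm⟩


lemma op2_mul_formula {a b c d : Fin m} (hac : a ≠ c) (had : a ≠ d) (hbc : b ≠ c) (hbd : b ≠ d)
    (X Y : End2 N) (f g : Fin m → Fin N) :
    (op2 N m X a b * op2 N m Y c d) f g =
      X (f a, f b) (g a, g b) * Y (f c, f d) (g c, g d) *
        (if ∀ i, i ≠ a → i ≠ b → i ≠ c → i ≠ d → f i = g i then 1 else 0) := by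
  classical
  set h₀ : Fin m → Fin N := fun i => if i = a ∨ i = b then g i else f i with hh₀
  have e1 : h₀ a = g a := if_pos (Or.inl rfl)
  have e2 : h₀ b = g b := if_pos (Or.inr rfl)
  have e3 : h₀ c = f c := if_neg (by rintro (h | h); exacts [hac h.symm, hbc h.symm])
  have e4 : h₀ d = f d := if_neg (by rintro (h | h); exacts [had h.symm, hbd h.symm])
  rw [Matrix.mul_apply]
  have hterm : ∀ h, op2 N m X a b f h * op2 N m Y c d h g =
      (X (f a, f b) (h a, h b) * (if ∀ i, i ≠ a ∧ i ≠ b → f i = h i then 1 else 0)) *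
      (Y (h c, h d) (g c, g d) * (if ∀ i, i ≠ c ∧ i ≠ d → h i = g i then 1 else 0)) := by
    intro h; rw [op2_apply, op2_apply]
  rw [Finset.sum_congr rfl fun h _ => hterm h]
  rw [Finset.sum_eq_single_of_mem h₀ (Finset.mem_univ _)]
  · rw [e1, e2, e3, e4]
    have d1 : (if ∀ i, i ≠ a ∧ i ≠ b → f i = h₀ i then (1:ℂ) else 0) = 1 := by
      rw [if_pos]
      intro i hi
      exact (if_neg (by rintro (h | h); exacts [hi.1 h, hi.2 h])).symm
    have d2 : (if ∀ i, i ≠ c ∧ i ≠ d → h₀ i = g i then (1:ℂ) else 0) =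
        (if ∀ i, i ≠ a → i ≠ b → i ≠ c → i ≠ d → f i = g i then 1 else 0) := by
      apply if_congr _ rfl rfl
      constructor
      · intro H i hia hib hic hid
        have hfi : h₀ i = f i := if_neg (by rintro (h | h); exacts [hia h, hib h])
        rw [← hfi]
        exact H i ⟨hic, hid⟩
      · intro H i hi
        by_cases hia : i = a
        · rw [hia, e1]
        by_cases hib : i = b
        · rw [hib, e2]
        have hfi : h₀ i = f i := if_neg (by rintro (h | h); exacts [hia h, hib h])
        rw [hfi]
        exact H i hia hib hi.1 hi.2
    rw [d1, d2]
    ring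
  · intro h _ hne
    by_cases hP1 : ∀ i, i ≠ a ∧ i ≠ b → f i = h i
    · by_cases hP2 : ∀ i, i ≠ c ∧ i ≠ d → h i = g i
      · exfalso
        apply hne
        funext i
        by_cases hia : i = a
        · rw [hia, e1]
          exact hP2 a ⟨hac, had⟩
        by_cases hib : i = b
        · rw [hib, e2]
          exact hP2 b ⟨hbc, hbd⟩
        rw [show h₀ i = f i from if_neg (by rintro (h | h); exacts [hia h, hib h])]
        exact (hP1 i ⟨hia, hib⟩).symm
      · rw [if_neg hP2]
        ring
    · rw [if_neg hP1]
      ring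

lemma op2_comm {a b c d : Fin m} (hac : a ≠ c) (had : a ≠ d) (hbc : b ≠ c) (hbd : b ≠ d)
    (X Y : End2 N) :
    op2 N m X a b * op2 N m Y c d = op2 N m Y c d * op2 N m X a b := by
  funext f g
  rw [op2_mul_formula hac had hbc hbd, op2_mul_formula hac.symm hbc.symm had.symm hbd.symm]
  rw [show (if ∀ i, i ≠ c → i ≠ d → i ≠ a → i ≠ b → f i = g i then (1:ℂ) else 0) =
      (if ∀ i, i ≠ a → i ≠ b → i ≠ c → i ≠ d → f i = g i then 1 else 0) from
    if_congr ⟨fun H i h1 h2 h3 h4 => H i h3 h4 h1 h2, fun H i h1 h2 h3 h4 => H i h3 h4 h1 h2⟩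
      rfl rfl]
  ring


lemma opBlock_list_prod {e : Fin k → Fin m} (he : Function.Injective e)
    (l : List (EndT N k)) :
    opBlock N e l.prod = (l.map (opBlock N e)).prod := by
  induction l with
  | nil => simpa using opBlock_one (N := N) he
  | cons x t ih => rw [List.prod_cons, opBlock_mul he, ih, List.map_cons, List.prod_cons]

lemma ybe_embed {R : ℂ → End2 N} (hR : YangBaxter N R)
    {a b c : Fin m} (hab : a ≠ b) (hac : a ≠ c) (hbc : b ≠ c) (u v : ℂ) :
    op2 N m (R u) a b * (op2 N m (R (u + v)) a c * op2 N m (R v) b c) =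
    op2 N m (R v) b c * (op2 N m (R (u + v)) a c * op2 N m (R u) a b) := by
  set e : Fin 3 → Fin m := ![a, b, c] with he'
  have he : Function.Injective e := by
    intro x y hxy
    fin_cases x <;> fin_cases y <;> simp_all [e]
  have e0 : e 0 = a := rfl
  have e1 : e 1 = b := rfl
  have e2 : e 2 = c := rfl
  have h01 : op2 N m (R u) a b = opBlock N e (op2 N 3 (R u) 0 1) := by
    rw [opBlock_op2 he, e0, e1]
  have h02 : op2 N m (R (u + v)) a c = opBlock N e (op2 N 3 (R (u + v)) 0 2) := by
    rw [opBlock_op2 he, e0, e2]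
  have h12 : op2 N m (R v) b c = opBlock N e (op2 N 3 (R v) 1 2) := by
    rw [opBlock_op2 he, e1, e2]
  rw [h01, h02, h12, ← opBlock_mul he, ← opBlock_mul he, ← opBlock_mul he, ← opBlock_mul he]
  have h := congrArg (opBlock N e) (hR u v)
  rw [mul_assoc, mul_assoc] at h
  exact h

end machinery
end

/-- On `V^{⊗n} ⊗ V` (copies of `V` labelled `1, …, n, n+1`), the operator
`R_{n,n+1}(c_n−v) ⋯ R_{2,n+1}(c_2−v) R_{1,n+1}(c_1−v)` maps the subspace `W_c ⊗ V`
(the image of `F(c) ⊗ Id`) into itself. -/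
theorem right_invariant_subspace
    (N : ℕ) (R : ℂ → End2 N) (hR : YangBaxter N R)
    (n : ℕ) (hn : 2 ≤ n) (c : Fin n → ℂ) (v : ℂ) :
    ∀ x ∈ LinearMap.range
        (Matrix.mulVecLin (opBlock N (Fin.castSucc : Fin n → Fin (n + 1)) (Fop N R c))),
      Matrix.mulVec
        ((((List.finRange n).reverse).map fun k =>
          op2 N (n + 1) (R (c k - v)) k.castSucc (Fin.last n)).prod) x ∈
      LinearMap.range
        (Matrix.mulVecLin (opBlock N (Fin.castSucc : Fin n → Fin (n + 1)) (Fop N R c))) := by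
  intro x hx
  obtain ⟨y, rfl⟩ := hx
  have hcs : Function.Injective (Fin.castSucc : Fin n → Fin (n + 1)) :=
    Fin.castSucc_injective n
  have hlast : ∀ i : Fin n, i.castSucc ≠ Fin.last n := fun i => (Fin.castSucc_lt_last i).ne
  set A : Fin n → EndT N (n + 1) :=
    fun i => op2 N (n + 1) (R (c i - v)) i.castSucc (Fin.last n) with hA
  set B : Fin n → Fin n → EndT N (n + 1) :=
    fun i j => op2 N (n + 1) (R (c i - c j)) i.castSucc j.castSucc with hB
  have h1 : ∀ i j : Fin n, i < j → B i j * (A i * A j) = A j * (A i * B i j) := by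
    intro i j hij
    have h := ybe_embed hR (a := i.castSucc) (b := j.castSucc) (c := Fin.last n)
      (fun hc => hij.ne (hcs hc)) (hlast i) (hlast j) (c i - c j) (c j - v)
    rw [show c i - c j + (c j - v) = c i - v by ring] at h
    exact h
  have h2 : ∀ i j k : Fin n, k ≠ i → k ≠ j → Commute (A k) (B i j) := by
    intro i j k hki hkj
    exact op2_comm (fun hc => hki (hcs hc)) (fun hc => hkj (hcs hc))
      (hlast i).symm (hlast j).symm _ _
  have hOF : opBlock N (Fin.castSucc : Fin n → Fin (n + 1)) (Fop N R c) =
      FBprod B (List.finRange n) := by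
    rw [Fop, opBlock_list_prod hcs, List.map_map]
    rw [show ((lexPairs n).map ((opBlock N (Fin.castSucc : Fin n → Fin (n + 1))) ∘
        fun p => op2 N n (R (c p.1 - c p.2)) p.1 p.2)) =
        ((lexPairs n).map fun p => B p.1 p.2) from
      List.map_congr_left fun p _ => opBlock_op2 hcs _ _ _]
    exact lexPairs_prod B (List.finRange n) (List.pairwise_lt_finRange n)
  have hkey := key_lemma A B h1 h2 (List.finRange n) (List.pairwise_lt_finRange n)
    (List.nodup_finRange n)
  refine ⟨(((List.finRange n).map A).prod).mulVec y, ?_⟩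
  rw [Matrix.mulVecLin_apply, Matrix.mulVecLin_apply, Matrix.mulVec_mulVec,
    Matrix.mulVec_mulVec, ← hOF] at *
  rw [← hkey, hOF]
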